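/- Let $\mathcal{F}$ be an $n$-uniform family and suppose there are $\lambda\in(0,1)$ and $T>0$ such that every proper subfamily $\mathcal{A}\subsetneq\mathcal{F}$ satisfies $c_n(\mathcal{A})\le T\lambda^{\tau(\mathcal{A})}$. If there exists a nonempty subfamily $\mathcal{F}'\subseteq\mathcal{F}$ with $c_{\lambda n}(\mathcal{F}')\le 1$, then $c_n(\mathcal{F})\le T\lambda^{\tau(\mathcal{F})}$. -/

import Mathlib

open Finset

variable {α : Type*}

/-- `C` is a cover of the family `𝓕`: it intersects every member. -/
def IsCover [DecidableEq α] (C : Finset α) (𝓕 : Finset (Finset α)) : Prop :=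
  ∀ A ∈ 𝓕, (C ∩ A).Nonempty

/-- The family of all minimal covers of `𝓕` of size at most `n`. -/
noncomputable def minCovers [Fintype α] [DecidableEq α] (n : ℕ)
    (𝓕 : Finset (Finset α)) : Finset (Finset α) := by
  classical
  exact univ.filter (fun C => C.card ≤ n ∧ IsCover C 𝓕 ∧
    ∀ C' ⊆ C, IsCover C' 𝓕 → C' = C)

/-- `c_λ(𝓕) = ∑_{C ∈ 𝓒(𝓕)} λ^{-|C|}`. -/
noncomputable def covWeight [Fintype α] [DecidableEq α] (n : ℕ) (lam : ℝ)
    (𝓕 : Finset (Finset α)) : ℝ :=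
  ∑ C ∈ minCovers n 𝓕, lam ^ (-(C.card : ℤ))

/-- The covering number `τ(𝓕)`: minimum size of a cover. -/
noncomputable def covNum [DecidableEq α] (𝓕 : Finset (Finset α)) : ℕ :=
  sInf {k | ∃ C : Finset α, C.card = k ∧ IsCover C 𝓕}

lemma mem_minCovers [Fintype α] [DecidableEq α] {n : ℕ} {𝓕 : Finset (Finset α)}
    {C : Finset α} : C ∈ minCovers n 𝓕 ↔ C.card ≤ n ∧ IsCover C 𝓕 ∧
      ∀ C' ⊆ C, IsCover C' 𝓕 → C' = C := by
  simp [minCovers]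

/-- Every cover contains a minimal cover. -/
lemma exists_min_subcover [DecidableEq α] (𝓕 : Finset (Finset α)) :
    ∀ C : Finset α, IsCover C 𝓕 → ∃ D, D ⊆ C ∧ IsCover D 𝓕 ∧
      ∀ C' ⊆ D, IsCover C' 𝓕 → C' = D := by
  intro C
  induction C using Finset.strongInductionOn with
  | _ C ih =>
    intro hC
    by_cases h : ∃ C', C' ⊂ C ∧ IsCover C' 𝓕
    · obtain ⟨C', hsub, hcov⟩ := h
      obtain ⟨D, hD1, hD2, hD3⟩ := ih C' hsub hcov
      exact ⟨D, hD1.trans hsub.subset, hD2, hD3⟩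
    · push_neg at h
      refine ⟨C, Finset.Subset.refl _, hC, fun C' hsub hcov => ?_⟩
      by_contra hne
      exact h C' (ssubset_of_subset_of_ne hsub hne) hcov

lemma covNum_le [DecidableEq α] {𝓕 : Finset (Finset α)} {C : Finset α}
    (h : IsCover C 𝓕) : covNum 𝓕 ≤ C.card :=
  Nat.sInf_le ⟨C, rfl, h⟩

theorem stmt3 [Fintype α] [DecidableEq α] (n : ℕ) (𝓕 : Finset (Finset α))
    (hunif : ∀ A ∈ 𝓕, A.card = n) (lam T : ℝ) (hl0 : 0 < lam) (hl1 : lam < 1) (hT : 0 < T)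
    (hyp : ∀ 𝓐 ⊆ 𝓕, 𝓐 ≠ 𝓕 → covWeight n (n : ℝ) 𝓐 ≤ T * lam ^ covNum 𝓐)
    (𝓕' : Finset (Finset α)) (h1 : 𝓕' ⊆ 𝓕) (h2 : 𝓕'.Nonempty)
    (h3 : covWeight n (lam * n) 𝓕' ≤ 1) :
    covWeight n (n : ℝ) 𝓕 ≤ T * lam ^ covNum 𝓕 := by
  classical
  obtain ⟨A₀, hA₀'⟩ := h2
  have hA₀ : A₀ ∈ 𝓕 := h1 hA₀'
  rcases Nat.eq_zero_or_pos n with hn0 | hn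
  · -- degenerate case n = 0 : 𝓕 contains ∅, so there are no covers at all
    subst hn0
    have hAe : A₀ = ∅ := Finset.card_eq_zero.mp (hunif A₀ hA₀)
    have hmc : minCovers 0 𝓕 = ∅ := by
      ext C
      simp only [mem_minCovers, Finset.notMem_empty, iff_false, not_and]
      intro _ hcov
      exfalso
      have := hcov A₀ hA₀
      simp [hAe] at this
    have h0 : covWeight 0 ((0:ℕ):ℝ) 𝓕 = 0 := by
      rw [covWeight, hmc, Finset.sum_empty]
    rw [h0]
    positivity
  -- main case n ≥ 1
  have hnR : (0:ℝ) < n := by exact_mod_cast hn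
  have hnne : ((n:ℝ)) ≠ 0 := ne_of_gt hnR
  -- the choice function g : picks a minimal subcover of 𝓕' inside a cover of 𝓕'
  set g : Finset α → Finset α := fun C =>
    if h : IsCover C 𝓕' then (exists_min_subcover 𝓕' C h).choose else ∅ with hg
  have hgspec : ∀ C : Finset α, IsCover C 𝓕' → g C ⊆ C ∧ IsCover (g C) 𝓕' ∧
      ∀ C' ⊆ g C, IsCover C' 𝓕' → C' = g C := by
    intro C h
    have := (exists_min_subcover 𝓕' C h).choose_spec
    simpa [hg, dif_pos h] using this
  have hcov' : ∀ C ∈ minCovers n 𝓕, IsCover C 𝓕' := by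
    intro C hC A hA
    exact (mem_minCovers.mp hC).2.1 A (h1 hA)
  have hmaps : ∀ C ∈ minCovers n 𝓕, g C ∈ minCovers n 𝓕' := by
    intro C hC
    obtain ⟨hcard, _, _⟩ := mem_minCovers.mp hC
    obtain ⟨hsub, hcov, hmin⟩ := hgspec C (hcov' C hC)
    exact mem_minCovers.mpr ⟨le_trans (Finset.card_le_card hsub) hcard, hcov, hmin⟩
  -- key inner bound
  have inner_bound : ∀ D ∈ minCovers n 𝓕',
      ∑ C ∈ (minCovers n 𝓕).filter (fun C => g C = D), (n:ℝ) ^ (-(C.card : ℤ))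
        ≤ T * lam ^ covNum 𝓕 * (lam * n) ^ (-(D.card : ℤ)) := by
    intro D hD
    obtain ⟨hDcard, hDcov, _⟩ := mem_minCovers.mp hD
    set 𝓕D : Finset (Finset α) := 𝓕.filter (fun A => A ∩ D = ∅) with h𝓕D
    set s : Finset (Finset α) := (minCovers n 𝓕).filter (fun C => g C = D) with hs
    -- for C in the fiber, D ⊆ C and C \ D is a minimal cover of 𝓕D
    have stepA : ∀ C ∈ s, D ⊆ C ∧ (C \ D) ∈ minCovers n 𝓕D := by
      intro C hC
      rw [hs, Finset.mem_filter] at hC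
      obtain ⟨hCm, hgC⟩ := hC
      obtain ⟨hCcard, hCcov, hCmin⟩ := mem_minCovers.mp hCm
      have hDC : D ⊆ C := hgC ▸ (hgspec C (hcov' C hCm)).1
      refine ⟨hDC, mem_minCovers.mpr ⟨?_, ?_, ?_⟩⟩
      · exact le_trans (Finset.card_le_card (Finset.sdiff_subset)) hCcard
      · intro A hA
        rw [h𝓕D, Finset.mem_filter] at hA
        obtain ⟨hA𝓕, hAD⟩ := hA
        obtain ⟨x, hx⟩ := hCcov A hA𝓕
        rw [Finset.mem_inter] at hx
        refine ⟨x, Finset.mem_inter.mpr ⟨Finset.mem_sdiff.mpr ⟨hx.1, ?_⟩, hx.2⟩⟩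
        intro hxD
        have : x ∈ A ∩ D := Finset.mem_inter.mpr ⟨hx.2, hxD⟩
        simp [hAD] at this
      · intro E hE hEcov
        have hDE : IsCover (D ∪ E) 𝓕 := by
          intro A hA
          by_cases hAD : (A ∩ D).Nonempty
          · obtain ⟨x, hx⟩ := hAD
            rw [Finset.mem_inter] at hx
            exact ⟨x, Finset.mem_inter.mpr ⟨Finset.mem_union_left _ hx.2, hx.1⟩⟩
          · have hA' : A ∈ 𝓕D := by
              rw [h𝓕D, Finset.mem_filter]
              exact ⟨hA, Finset.not_nonempty_iff_eq_empty.mp hAD⟩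
            obtain ⟨x, hx⟩ := hEcov A hA'
            rw [Finset.mem_inter] at hx
            exact ⟨x, Finset.mem_inter.mpr ⟨Finset.mem_union_right _ hx.1, hx.2⟩⟩
        have hsubC : D ∪ E ⊆ C :=
          Finset.union_subset hDC (hE.trans (Finset.sdiff_subset))
        have hCeq : D ∪ E = C := hCmin _ hsubC hDE
        have hdisj : Disjoint E D :=
          Finset.disjoint_of_subset_left hE Finset.sdiff_disjoint
        rw [← hCeq, Finset.union_sdiff_cancel_left hdisj.symm]
    -- 𝓕D is a proper subfamily of 𝓕
    have hproper : 𝓕D ≠ 𝓕 := by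
      intro heq
      obtain ⟨x, hx⟩ := hDcov A₀ hA₀'
      rw [Finset.mem_inter] at hx
      have hmem : A₀ ∈ 𝓕D := heq ▸ hA₀
      rw [h𝓕D, Finset.mem_filter] at hmem
      have hx' : x ∈ A₀ ∩ D := Finset.mem_inter.mpr ⟨hx.2, hx.1⟩
      rw [hmem.2] at hx'
      exact absurd hx' (Finset.notMem_empty x)
    -- covering number inequality : covNum 𝓕 ≤ covNum 𝓕D + D.card
    have hτ : covNum 𝓕 ≤ covNum 𝓕D + D.card := by
      have hne : {k | ∃ C : Finset α, C.card = k ∧ IsCover C 𝓕D}.Nonempty := by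
        refine ⟨(univ : Finset α).card, univ, rfl, fun A hA => ?_⟩
        rw [h𝓕D, Finset.mem_filter] at hA
        have : A.Nonempty := Finset.card_pos.mp (by rw [hunif A hA.1]; exact hn)
        simpa using this
      obtain ⟨E, hEcard, hEcov⟩ := Nat.sInf_mem hne
      have hcov𝓕 : IsCover (E ∪ D) 𝓕 := by
        intro A hA
        by_cases hAD : (A ∩ D).Nonempty
        · obtain ⟨x, hx⟩ := hAD
          rw [Finset.mem_inter] at hx
          exact ⟨x, Finset.mem_inter.mpr ⟨Finset.mem_union_right _ hx.2, hx.1⟩⟩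
        · have hA' : A ∈ 𝓕D := by
            rw [h𝓕D, Finset.mem_filter]
            exact ⟨hA, Finset.not_nonempty_iff_eq_empty.mp hAD⟩
          obtain ⟨x, hx⟩ := hEcov A hA'
          rw [Finset.mem_inter] at hx
          exact ⟨x, Finset.mem_inter.mpr ⟨Finset.mem_union_left _ hx.1, hx.2⟩⟩
      calc covNum 𝓕 ≤ (E ∪ D).card := covNum_le hcov𝓕
        _ ≤ E.card + D.card := Finset.card_union_le _ _
        _ = covNum 𝓕D + D.card := by rw [hEcard]; rfl
    -- sum over the fiber
    have hsum : ∑ C ∈ s, (n:ℝ) ^ (-(C.card : ℤ))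
        = (n:ℝ) ^ (-(D.card : ℤ)) * ∑ C ∈ s, (n:ℝ) ^ (-((C \ D).card : ℤ)) := by
      rw [Finset.mul_sum]
      refine Finset.sum_congr rfl fun C hC => ?_
      have hDC := (stepA C hC).1
      have hcareq : (C \ D).card + D.card = C.card :=
        Finset.card_sdiff_add_card_eq_card hDC
      have : (-(C.card : ℤ)) = (-(D.card : ℤ)) + (-((C \ D).card : ℤ)) := by
        rw [← hcareq]; push_cast; ring
      rw [this, zpow_add₀ hnne]
    have himg : ∑ C ∈ s, (n:ℝ) ^ (-((C \ D).card : ℤ))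
        ≤ covWeight n (n:ℝ) 𝓕D := by
      have himage : ∑ E ∈ s.image (fun C => C \ D), (n:ℝ) ^ (-(E.card : ℤ))
          = ∑ C ∈ s, (n:ℝ) ^ (-((C \ D).card : ℤ)) := by
        apply Finset.sum_image
        intro x hx y hy hxy
        have hx' := (stepA x hx).1
        have hy' := (stepA y hy).1
        rw [← Finset.union_sdiff_of_subset hx', ← Finset.union_sdiff_of_subset hy', show x \ D = y \ D from hxy]
      rw [← himage]
      apply Finset.sum_le_sum_of_subset_of_nonneg
      · intro E hE
        obtain ⟨C, hC, rfl⟩ := Finset.mem_image.mp hE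
        exact (stepA C hC).2
      · intro E _ _
        positivity
    have hhyp : covWeight n (n:ℝ) 𝓕D ≤ T * lam ^ covNum 𝓕D :=
      hyp 𝓕D (Finset.filter_subset _ _) hproper
    have hlam : lam ^ covNum 𝓕D ≤ lam ^ covNum 𝓕 / lam ^ D.card := by
      rw [le_div_iff₀ (pow_pos hl0 _), ← pow_add]
      exact pow_le_pow_of_le_one hl0.le hl1.le hτ
    calc ∑ C ∈ s, (n:ℝ) ^ (-(C.card : ℤ))
        = (n:ℝ) ^ (-(D.card : ℤ)) * ∑ C ∈ s, (n:ℝ) ^ (-((C \ D).card : ℤ)) := hsum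
      _ ≤ (n:ℝ) ^ (-(D.card : ℤ)) * (T * lam ^ covNum 𝓕D) := by
          apply mul_le_mul_of_nonneg_left (le_trans himg hhyp) (by positivity)
      _ ≤ (n:ℝ) ^ (-(D.card : ℤ)) * (T * (lam ^ covNum 𝓕 / lam ^ D.card)) := by
          apply mul_le_mul_of_nonneg_left _ (by positivity)
          exact mul_le_mul_of_nonneg_left hlam hT.le
      _ = T * lam ^ covNum 𝓕 * (lam * n) ^ (-(D.card : ℤ)) := by
          rw [mul_zpow, zpow_neg, zpow_neg, zpow_natCast, zpow_natCast]
          field_simp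
  -- put everything together
  rw [covWeight]
  calc ∑ C ∈ minCovers n 𝓕, (n:ℝ) ^ (-(C.card : ℤ))
      = ∑ D ∈ minCovers n 𝓕', ∑ C ∈ (minCovers n 𝓕).filter (fun C => g C = D),
          (n:ℝ) ^ (-(C.card : ℤ)) := (Finset.sum_fiberwise_of_maps_to hmaps _).symm
    _ ≤ ∑ D ∈ minCovers n 𝓕', T * lam ^ covNum 𝓕 * (lam * n) ^ (-(D.card : ℤ)) :=
        Finset.sum_le_sum inner_bound
    _ = T * lam ^ covNum 𝓕 * covWeight n (lam * n) 𝓕' := by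
        rw [covWeight, Finset.mul_sum]
    _ ≤ T * lam ^ covNum 𝓕 * 1 := by
        apply mul_le_mul_of_nonneg_left h3 (by positivity)
    _ = T * lam ^ covNum 𝓕 := mul_one _
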